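/- For every nonempty finite trace π = π₀,…,π_n over 2^P and every propositional formula G over P: π satisfies the LTLf formula □G under standard LTLf finite-trace semantics at position 0 (i.e., G holds at every position 0 ≤ j ≤ n) if and only if π ⊨ ⟨G*⟩end under LDLf semantics. -/

import Mathlib

/-- Propositional formulas over atomic propositions `P`. -/
inductive PropForm (P : Type) : Type
  | tru : PropForm P
  | atom : P → PropForm P
  | not : PropForm P → PropForm P
  | and : PropForm P → PropForm P → PropForm P

/-- Satisfaction of a propositional formula by an interpretation (subset of `P`). -/
def PropForm.Sat {P : Type} (I : Set P) : PropForm P → Prop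
  | .tru => True
  | .atom p => p ∈ I
  | .not ϕ => ¬ PropForm.Sat I ϕ
  | .and ϕ ψ => PropForm.Sat I ϕ ∧ PropForm.Sat I ψ

mutual
/-- LDLf formulas over atomic propositions `P`. -/
inductive LDLf (P : Type) : Type
  | tt : LDLf P
  | neg : LDLf P → LDLf P
  | conj : LDLf P → LDLf P → LDLf P
  | dia : PathExp P → LDLf P → LDLf P

/-- Path expressions of LDLf. -/
inductive PathExp (P : Type) : Type
  | prop : PropForm P → PathExp P
  | test : LDLf P → PathExp P
  | plus : PathExp P → PathExp P → PathExp P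
  | comp : PathExp P → PathExp P → PathExp P
  | star : PathExp P → PathExp P
end

mutual
/-- `LDLf.SatAt π φ i` : the LDLf formula `φ` is true at position `i` of the finite trace `π`. -/
def LDLf.SatAt {P : Type} (π : List (Set P)) : LDLf P → ℕ → Prop
  | .tt => fun _ => True
  | .neg φ => fun i => ¬ LDLf.SatAt π φ i
  | .conj φ₁ φ₂ => fun i => LDLf.SatAt π φ₁ i ∧ LDLf.SatAt π φ₂ i
  | .dia ρ φ => fun i => ∃ j, i ≤ j ∧ j ≤ π.length ∧ PathExp.Sem π ρ i j ∧ LDLf.SatAt π φ j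

/-- `PathExp.Sem π ρ i j` : the relation `π(i,j) ∈ L(ρ)`. -/
def PathExp.Sem {P : Type} (π : List (Set P)) : PathExp P → ℕ → ℕ → Prop
  | .prop ϕ => fun i j => j = i + 1 ∧ j ≤ π.length ∧ PropForm.Sat (π.getD i ∅) ϕ
  | .test ψ => fun i j => j = i ∧ LDLf.SatAt π ψ i
  | .plus ρ₁ ρ₂ => fun i j => PathExp.Sem π ρ₁ i j ∨ PathExp.Sem π ρ₂ i j
  | .comp ρ₁ ρ₂ => fun i j => ∃ k, PathExp.Sem π ρ₁ i k ∧ PathExp.Sem π ρ₂ k j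
  | .star ρ => Relation.ReflTransGen (PathExp.Sem π ρ)
end

/-- `[ρ]φ ≐ ¬⟨ρ⟩¬φ`. -/
def LDLf.box {P : Type} (ρ : PathExp P) (φ : LDLf P) : LDLf P := .neg (.dia ρ (.neg φ))

/-- `ff ≐ ¬tt`. -/
def LDLf.ff {P : Type} : LDLf P := .neg .tt

/-- A propositional formula `ϕ` used as an LDLf formula stands for `⟨ϕ⟩tt`. -/
def LDLf.ofProp {P : Type} (ϕ : PropForm P) : LDLf P := .dia (.prop ϕ) .tt

/-- `end ≐ [true?]ff`. -/
def LDLf.endf {P : Type} : LDLf P := LDLf.box (.test (LDLf.ofProp .tru)) LDLf.ff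

/-- `last ≐ [true]end`. -/
def LDLf.lastf {P : Type} : LDLf P := LDLf.box (.prop .tru) LDLf.endf

/-- `π ⊨ φ` means `π,0 ⊨ φ`. -/
def LDLf.Sat {P : Type} (π : List (Set P)) (φ : LDLf P) : Prop := LDLf.SatAt π φ 0

/-- LTLf formulas over atomic propositions `P`. -/
inductive LTLf (P : Type) : Type
  | prop : PropForm P → LTLf P
  | neg : LTLf P → LTLf P
  | conj : LTLf P → LTLf P → LTLf P
  | next : LTLf P → LTLf P
  | untl : LTLf P → LTLf P → LTLf P

/-- Standard LTLf finite-trace semantics: `LTLf.SatAt π φ i` means `φ` holds at position `i`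
of the nonempty finite trace `π`. -/
def LTLf.SatAt {P : Type} (π : List (Set P)) : LTLf P → ℕ → Prop
  | .prop ϕ => fun i => PropForm.Sat (π.getD i ∅) ϕ
  | .neg φ => fun i => ¬ LTLf.SatAt π φ i
  | .conj φ₁ φ₂ => fun i => LTLf.SatAt π φ₁ i ∧ LTLf.SatAt π φ₂ i
  | .next φ => fun i => i + 1 < π.length ∧ LTLf.SatAt π φ (i + 1)
  | .untl φ₁ φ₂ => fun i => ∃ j, i ≤ j ∧ j < π.length ∧ LTLf.SatAt π φ₂ j ∧
      ∀ k, i ≤ k → k < j → LTLf.SatAt π φ₁ k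

/-- `◇φ ≐ true U φ`. -/
def LTLf.ev {P : Type} (φ : LTLf P) : LTLf P := .untl (.prop .tru) φ

/-- `□φ ≐ ¬◇¬φ`. -/
def LTLf.always {P : Type} (φ : LTLf P) : LTLf P := .neg (LTLf.ev (.neg φ))

/-- `last ≐ ¬○true`: holds at `i` iff `i` is the final position of the trace. -/
def LTLf.lastf {P : Type} : LTLf P := .neg (.next (.prop .tru))

/-- `π ⊨ φ` means `φ` holds at position `0` of `π`. -/
def LTLf.Sat {P : Type} (π : List (Set P)) (φ : LTLf P) : Prop := LTLf.SatAt π φ 0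


/-- On nonempty finite traces, the LTLf formula `□G` is equivalent to the LDLf formula
`⟨G*⟩end`. -/
theorem ltlf_always_iff_ldlf {P : Type} (π : List (Set P)) (hπ : π ≠ [])
    (G : PropForm P) :
    LTLf.Sat π (LTLf.always (.prop G)) ↔
      LDLf.Sat π (.dia (.star (.prop G)) LDLf.endf) := by
  have hend : ∀ i, LDLf.SatAt π LDLf.endf i ↔ π.length ≤ i := by
    intro i
    simp [LDLf.endf, LDLf.box, LDLf.ff, LDLf.ofProp, LDLf.SatAt, PathExp.Sem, PropForm.Sat]
    omega
  have hstep : ∀ i j, PathExp.Sem π (.prop G) i j ↔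
      (j = i + 1 ∧ j ≤ π.length ∧ PropForm.Sat (π.getD i ∅) G) := fun _ _ => Iff.rfl
  have hdia : LDLf.Sat π (.dia (.star (.prop G)) LDLf.endf) ↔
      ∃ j, 0 ≤ j ∧ j ≤ π.length ∧ Relation.ReflTransGen (PathExp.Sem π (.prop G)) 0 j ∧
        LDLf.SatAt π LDLf.endf j := Iff.rfl
  have hltl : LTLf.Sat π (LTLf.always (.prop G)) ↔
      ¬ ∃ j, 0 ≤ j ∧ j < π.length ∧ (¬ PropForm.Sat (π.getD j ∅) G) ∧
        ∀ k, 0 ≤ k → k < j → PropForm.Sat (π.getD k ∅) PropForm.tru := Iff.rfl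
  have hchain : ∀ i j, Relation.ReflTransGen (PathExp.Sem π (.prop G)) i j →
      i ≤ j ∧ ∀ k, i ≤ k → k < j → PropForm.Sat (π.getD k ∅) G := by
    intro i j h
    induction h with
    | refl => exact ⟨le_refl _, fun k h1 h2 => absurd h2 (by omega)⟩
    | @tail b c hab hbc ih =>
      obtain ⟨h1, h2, h3⟩ := (hstep _ _).1 hbc
      refine ⟨by omega, fun k hk1 hk2 => ?_⟩
      rcases Nat.lt_or_ge k b with hh | hh
      · exact ih.2 k hk1 hh
      · have : k = b := by omega
        exact this ▸ h3
  rw [hltl, hdia]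
  constructor
  · intro h
    have hG : ∀ j < π.length, PropForm.Sat (π.getD j ∅) G := by
      intro j hj
      by_contra hc
      exact h ⟨j, Nat.zero_le j, hj, hc, fun k _ _ => trivial⟩
    have chain : ∀ m, m ≤ π.length → Relation.ReflTransGen (PathExp.Sem π (.prop G)) 0 m := by
      intro m
      induction m with
      | zero => exact fun _ => .refl
      | succ n ih =>
        intro hm
        exact Relation.ReflTransGen.tail (ih (Nat.le_of_succ_le hm))
          ((hstep n (n+1)).2 ⟨rfl, hm, hG n (Nat.lt_of_succ_le hm)⟩)
    exact ⟨π.length, Nat.zero_le _, le_refl _, chain _ (le_refl _), (hend _).2 (le_refl _)⟩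
  · rintro ⟨j, -, hjl, hsem, hendj⟩
    have hj : π.length ≤ j := (hend j).1 hendj
    have hall := (hchain 0 j hsem).2
    rintro ⟨k, hk0, hkl, hkG, -⟩
    exact hkG (hall k (Nat.zero_le _) (by omega))
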